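/- There exists a Wang tile set τ that admits a tiling of the plane and is aperiodic: for every tiling f of the plane by τ and every nonzero vector v ∈ ℤ², there exists x ∈ ℤ² with f (x + v) ≠ f x. -/

import Mathlib

/-- A Wang tile set: a finite (enumerable) set of tiles, a finite set of colors,
and the four side colors of each tile. -/
structure WangTileSet where
  Tile : Type
  Color : Type
  fintypeTile : Fintype Tile
  decEqTile : DecidableEq Tile
  encodableTile : Encodable Tile
  fintypeColor : Fintype Color
  north : Tile → Color
  south : Tile → Color
  east : Tile → Color
  west : Tile → Color

attribute [instance] WangTileSet.fintypeTile WangTileSet.decEqTile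
  WangTileSet.encodableTile WangTileSet.fintypeColor

/-- `f` is a tiling of the plane by the Wang tile set `W`. -/
def WangTileSet.IsTiling (W : WangTileSet) (f : ℤ × ℤ → W.Tile) : Prop :=
  ∀ i j : ℤ,
    W.east (f (i, j)) = W.west (f (i + 1, j)) ∧
    W.north (f (i, j)) = W.south (f (i, j + 1))

/-- The `n × n` block of `f` at position `(i, j)`. -/
def WangTileSet.block (W : WangTileSet) (f : ℤ × ℤ → W.Tile) (n : ℕ) (i j : ℤ) :
    Fin n × Fin n → W.Tile :=
  fun p => f (i + (p.1 : ℤ), j + (p.2 : ℤ))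

/-- Plain Kolmogorov complexity of a natural number: the least size of a code
evaluating to it on input `0`. -/
noncomputable def K (m : ℕ) : ℕ :=
  sInf {k | ∃ c : Nat.Partrec.Code, c.eval 0 = Part.some m ∧ Nat.size (Encodable.encode c) = k}


namespace Aper

def step (y : ℚ) : ℚ := if y ≤ 1 then 2*y else (2/3)*y
def back (y : ℚ) : ℚ := if 4/3 < y then y/2 else (3/2)*y

def F : ℕ → ℚ := fun n => Nat.rec 1 (fun _ y => step y) n
def G : ℕ → ℚ := fun n => Nat.rec 1 (fun _ y => back y) n

def x (j : ℤ) : ℚ := if 0 ≤ j then F j.toNat else G (-j).toNat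

lemma F_succ (n : ℕ) : F (n+1) = step (F n) := rfl
lemma G_succ (n : ℕ) : G (n+1) = back (G n) := rfl

def Inter (y : ℚ) : Prop := 2/3 < y ∧ y ≤ 2

lemma step_mem {y : ℚ} (h : Inter y) : Inter (step y) := by
  obtain ⟨h1, h2⟩ := h
  unfold step; split <;> constructor <;> linarith

lemma back_mem {y : ℚ} (h : Inter y) : Inter (back y) := by
  obtain ⟨h1, h2⟩ := h
  unfold back; split <;> constructor <;> linarith

lemma step_back {y : ℚ} (h : Inter y) : step (back y) = y := by
  obtain ⟨h1, h2⟩ := h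
  unfold back; split
  · unfold step; rw [if_pos (by linarith)]; ring
  · unfold step; rw [if_neg (by intro hc; linarith)]; ring

lemma F_mem (n : ℕ) : Inter (F n) := by
  induction n with
  | zero => exact ⟨by norm_num [F], by norm_num [F]⟩
  | succ n ih => exact step_mem ih

lemma G_mem (n : ℕ) : Inter (G n) := by
  induction n with
  | zero => exact ⟨by norm_num [G], by norm_num [G]⟩
  | succ n ih => exact back_mem ih

lemma x_mem (j : ℤ) : Inter (x j) := by
  unfold x; split
  · exact F_mem _
  · exact G_mem _

lemma x_succ (j : ℤ) : x (j+1) = step (x j) := by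
  rcases le_or_gt 0 j with hj | hj
  · have h1 : x (j+1) = F ((j+1).toNat) := by unfold x; rw [if_pos (by omega)]
    have h2 : x j = F j.toNat := by unfold x; rw [if_pos hj]
    have h3 : (j+1).toNat = j.toNat + 1 := by omega
    rw [h1, h2, h3, F_succ]
  · -- j < 0
    have hk : (-j).toNat = (-(j+1)).toNat + 1 := by omega
    have h2 : x j = back (G ((-(j+1)).toNat)) := by
      unfold x; rw [if_neg (by omega), hk, G_succ]
    have h1 : x (j+1) = G ((-(j+1)).toNat) := by
      unfold x; split
      · have : j + 1 = 0 := by omega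
        simp [this]
        rfl
      · rfl
    rw [h1, h2, step_back (G_mem _)]

def q (j : ℤ) : Bool := decide (x j ≤ 1)

def mul (b : Bool) : ℤ := if b then 6 else 2

lemma mul_x (j : ℤ) : (mul (q j) : ℚ) * x j = 3 * x (j+1) := by
  rw [x_succ]
  unfold q mul step
  rcases le_or_gt (x j) 1 with h | h
  · rw [if_pos (decide_eq_true h), if_pos h]; push_cast; ring
  · rw [if_neg (by simp only [decide_eq_true_eq]; intro hc; linarith),
        if_neg (not_le.2 h)]
    push_cast; ring

def sB (i j : ℤ) : ℤ := ⌊((i:ℚ)+1) * x j⌋ - ⌊(i:ℚ) * x j⌋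
def wB (i j : ℤ) : ℤ := mul (q j) * ⌊(i:ℚ) * x j⌋ - 3 * ⌊(i:ℚ) * x (j+1)⌋

lemma sB_nonneg (i j : ℤ) : 0 ≤ sB i j := by
  have h := (x_mem j).1
  have : (i:ℚ) * x j ≤ ((i:ℚ)+1) * x j := by nlinarith
  have := Int.floor_le_floor this
  unfold sB; omega

lemma sB_le2 (i j : ℤ) : sB i j ≤ 2 := by
  have h2 := (x_mem j).2
  have h1 : (i:ℚ) * x j < ⌊(i:ℚ) * x j⌋ + 1 := Int.lt_floor_add_one _
  have : ⌊((i:ℚ)+1) * x j⌋ < ⌊(i:ℚ) * x j⌋ + 3 := by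
    apply Int.floor_lt.2
    push_cast
    nlinarith
  unfold sB; omega

lemma sB_pos (i j : ℤ) (hx : 1 ≤ x j) : 1 ≤ sB i j := by
  have h1 : (⌊(i:ℚ) * x j⌋ : ℚ) ≤ (i:ℚ) * x j := Int.floor_le _
  have : ⌊(i:ℚ) * x j⌋ + 1 ≤ ⌊((i:ℚ)+1) * x j⌋ := by
    apply Int.le_floor.2
    push_cast
    nlinarith
  unfold sB; omega

lemma good_sum (i j : ℤ) : 1 ≤ sB i j + sB i (j+1) := by
  rcases le_or_gt (x j) 1 with h | h
  · have hx : x (j+1) = 2 * x j := by rw [x_succ]; unfold step; rw [if_pos h]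
    have h1 := (x_mem j).1
    have : 1 ≤ x (j+1) := by rw [hx]; linarith
    have := sB_pos i (j+1) this
    have := sB_nonneg i j
    omega
  · have := sB_pos i j h.le
    have := sB_nonneg i (j+1)
    omega

lemma key (i j : ℤ) : (mul (q j):ℚ) * ((i:ℚ) * x j) = 3 * ((i:ℚ) * x (j+1)) := by
  have := mul_x j
  linear_combination (i:ℚ) * this

lemma mul_pos' (j : ℤ) : (0:ℤ) < mul (q j) := by unfold mul; split <;> norm_num

lemma wB_le2 (i j : ℤ) : wB i j ≤ 2 := by
  have hk := key i j
  have h1 : (⌊(i:ℚ) * x j⌋ : ℚ) ≤ (i:ℚ) * x j := Int.floor_le _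
  have h2 : (i:ℚ) * x (j+1) < ⌊(i:ℚ) * x (j+1)⌋ + 1 := Int.lt_floor_add_one _
  have hm : (0:ℚ) ≤ (mul (q j) : ℚ) := by exact_mod_cast (mul_pos' j).le
  have h3 : ((wB i j : ℤ) : ℚ) < 3 := by
    unfold wB
    push_cast
    nlinarith [mul_le_mul_of_nonneg_left h1 hm]
  have : (wB i j) < 3 := by exact_mod_cast h3
  omega

lemma wB_ge (i j : ℤ) : -3 ≤ wB i j := by
  have hk := key i j
  have h1 : (i:ℚ) * x j < ⌊(i:ℚ) * x j⌋ + 1 := Int.lt_floor_add_one _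
  have h2 : (⌊(i:ℚ) * x (j+1)⌋ : ℚ) ≤ (i:ℚ) * x (j+1) := Int.floor_le _
  rcases hq : q j with _ | _
  · -- q j = false, mul = 2
    have hm : mul (q j) = 2 := by rw [hq]; rfl
    have h3 : ((wB i j : ℤ) : ℚ) > -2 := by
      unfold wB
      rw [hm]
      push_cast
      rw [hm] at hk
      push_cast at hk
      nlinarith
    have : (-2:ℤ) < wB i j := by exact_mod_cast h3
    omega
  · -- q j = true, mul = 6
    have hm : mul (q j) = 6 := by rw [hq]; rfl
    have hdvd : (3:ℤ) ∣ wB i j := ⟨2 * ⌊(i:ℚ) * x j⌋ - ⌊(i:ℚ) * x (j+1)⌋, by unfold wB; rw [hm]; ring⟩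
    have h3 : ((wB i j : ℤ) : ℚ) > -6 := by
      unfold wB
      rw [hm]
      push_cast
      rw [hm] at hk
      push_cast at hk
      nlinarith
    have : (-6:ℤ) < wB i j := by exact_mod_cast h3
    omega

lemma rel (i j : ℤ) :
    3 * sB i (j+1) = mul (q j) * sB i j + wB i j - wB (i+1) j := by
  have hk : mul (q j) * ⌊((i:ℚ)+1) * x j⌋ - 3 * ⌊((i:ℚ)+1) * x (j+1)⌋ = wB (i+1) j := by
    unfold wB; push_cast; ring
  unfold sB wB
  unfold wB at hk
  push_cast at hk ⊢
  linarith [hk]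


abbrev Raw : Type := Bool × Fin 3 × Fin 3 × Fin 6 × Fin 6

def Good (t : Raw) : Prop :=
  3 * (t.2.2.1 : ℤ) = mul t.1 * (t.2.1 : ℤ) + ((t.2.2.2.1 : ℤ) - 3) - ((t.2.2.2.2 : ℤ) - 3)
  ∧ 1 ≤ (t.2.1 : ℤ) + (t.2.2.1 : ℤ)

instance : DecidablePred Good := fun t => by unfold Good; infer_instance

abbrev TileT : Type := {t : Raw // Good t}

def tile (i j : ℤ) : TileT :=
  ⟨(q j,
    ⟨(sB i j).toNat, by have := sB_nonneg i j; have := sB_le2 i j; omega⟩,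
    ⟨(sB i (j+1)).toNat, by have := sB_nonneg i (j+1); have := sB_le2 i (j+1); omega⟩,
    ⟨(wB i j + 3).toNat, by have := wB_ge i j; have := wB_le2 i j; omega⟩,
    ⟨(wB (i+1) j + 3).toNat, by have := wB_ge (i+1) j; have := wB_le2 (i+1) j; omega⟩),
   by
     unfold Good
     simp only []
     constructor
     · rw [Int.toNat_of_nonneg (sB_nonneg i (j+1)), Int.toNat_of_nonneg (sB_nonneg i j),
           Int.toNat_of_nonneg (show (0:ℤ) ≤ wB i j + 3 by have := wB_ge i j; omega),
           Int.toNat_of_nonneg (show (0:ℤ) ≤ wB (i+1) j + 3 by have := wB_ge (i+1) j; omega)]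
       linarith [rel i j]
     · rw [Int.toNat_of_nonneg (sB_nonneg i j), Int.toNat_of_nonneg (sB_nonneg i (j+1))]
       exact good_sum i j⟩

def W : WangTileSet where
  Tile := TileT
  Color := Fin 3 ⊕ (Bool × Fin 6)
  fintypeTile := inferInstance
  decEqTile := inferInstance
  encodableTile := inferInstance
  fintypeColor := inferInstance
  north t := Sum.inl t.1.2.2.1
  south t := Sum.inl t.1.2.1
  west t := Sum.inr (t.1.1, t.1.2.2.2.1)
  east t := Sum.inr (t.1.1, t.1.2.2.2.2)

def f0 : ℤ × ℤ → TileT := fun p => tile p.1 p.2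

lemma f0_tiling : W.IsTiling f0 := fun i j => ⟨rfl, rfl⟩

-- accessors
def sv (t : TileT) : ℤ := t.1.2.1
def nv (t : TileT) : ℤ := t.1.2.2.1
def wv (t : TileT) : ℤ := (t.1.2.2.2.1 : ℤ) - 3
def ev (t : TileT) : ℤ := (t.1.2.2.2.2 : ℤ) - 3
def tg (t : TileT) : Bool := t.1.1

lemma tile_rel (t : TileT) : 3 * nv t = mul (tg t) * sv t + wv t - ev t := t.2.1
lemma tile_sum (t : TileT) : 1 ≤ sv t + nv t := t.2.2
lemma sv_nonneg (t : TileT) : 0 ≤ sv t := Int.ofNat_nonneg _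
lemma sv_le (t : TileT) : sv t ≤ 2 := by
  have := (t.1.2.1).is_lt; unfold sv; omega
lemma wv_ge (t : TileT) : -3 ≤ wv t := by unfold wv; omega
lemma wv_le (t : TileT) : wv t ≤ 2 := by
  have := (t.1.2.2.2.1).is_lt; unfold wv; omega
lemma mul_pos (b : Bool) : 0 < mul b := by unfold mul; split <;> norm_num
lemma mul_le (b : Bool) : mul b ≤ 6 := by unfold mul; split <;> norm_num
lemma mul_even (b : Bool) : 2 ∣ mul b := by unfold mul; split <;> norm_num

section Tiling

variable (f : ℤ × ℤ → TileT) (hf : W.IsTiling f)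
include hf

lemma east_west (i j : ℤ) :
    tg (f (i,j)) = tg (f (i+1,j)) ∧ ev (f (i,j)) = wv (f (i+1,j)) := by
  have h := (hf i j).1
  have h' : (Sum.inr ((f (i,j)).1.1, (f (i,j)).1.2.2.2.2) : Fin 3 ⊕ (Bool × Fin 6))
      = Sum.inr ((f (i+1,j)).1.1, (f (i+1,j)).1.2.2.2.1) := h
  simp only [Sum.inr.injEq, Prod.mk.injEq] at h'
  exact ⟨h'.1, by unfold ev wv; rw [h'.2]⟩

lemma north_south (i j : ℤ) : nv (f (i,j)) = sv (f (i,j+1)) := by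
  have h := (hf i j).2
  have h' : (Sum.inl ((f (i,j)).1.2.2.1) : Fin 3 ⊕ (Bool × Fin 6))
      = Sum.inl ((f (i,j+1)).1.2.1) := h
  simp only [Sum.inl.injEq] at h'
  unfold nv sv; rw [h']

lemma tag_row (j : ℤ) : ∀ i : ℤ, tg (f (i,j)) = tg (f (0,j)) := by
  intro i
  induction i using Int.induction_on with
  | zero => rfl
  | succ k ih => rw [← (east_west f hf k j).1, ih]
  | pred k ih => rw [(east_west f hf (-(k:ℤ)-1) j).1]; convert ih using 3; ring

def A (j c : ℤ) (N : ℕ) : ℤ := ∑ k ∈ Finset.range N, sv (f (c + (k:ℤ), j))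

omit hf in
lemma A_nonneg (j c : ℤ) (N : ℕ) : 0 ≤ A f j c N :=
  Finset.sum_nonneg fun k _ => sv_nonneg _

omit hf in
lemma A_le (j c : ℤ) (N : ℕ) : A f j c N ≤ 2 * N := by
  calc A f j c N ≤ ∑ _k ∈ Finset.range N, 2 :=
        Finset.sum_le_sum fun k _ => sv_le _
    _ = 2 * N := by rw [Finset.sum_const, Finset.card_range]; ring

omit hf in
lemma A_succ (j c : ℤ) (N : ℕ) :
    A f j c (N+1) = A f j c N + sv (f (c + (N:ℤ), j)) := by
  unfold A; rw [Finset.sum_range_succ]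

lemma R1 (j c : ℤ) (N : ℕ) :
    3 * A f (j+1) c N
      = mul (tg (f (c,j))) * A f j c N + wv (f (c,j)) - wv (f (c + (N:ℤ),j)) := by
  induction N with
  | zero => simp [A]
  | succ N ih =>
    have hns := north_south f hf (c + (N:ℤ)) j
    have hrel := tile_rel (f (c + (N:ℤ), j))
    have htag : tg (f (c + (N:ℤ), j)) = tg (f (c, j)) := by
      rw [tag_row f hf j, tag_row f hf j c]
    have hew := (east_west f hf (c + (N:ℤ)) j).2
    rw [htag] at hrel
    have hc : (c + ((N:ℤ)+1)) = (c + (N:ℤ)) + 1 := by ring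
    rw [A_succ, A_succ, ← hns]
    push_cast
    rw [hc, ← hew]
    linarith [ih, hrel]

omit hf in
lemma A_shift1 (j c : ℤ) (N : ℕ) :
    A f j (c+1) N = A f j c N + sv (f (c + (N:ℤ), j)) - sv (f (c, j)) := by
  induction N with
  | zero => simp [A]
  | succ N ih =>
    rw [A_succ, A_succ, ih]
    have h1 : c + 1 + (N:ℤ) = c + ((N:ℤ)+1) := by ring
    push_cast
    rw [h1]
    ring

omit hf in
lemma A_shift_nat (j c : ℤ) (N : ℕ) : ∀ t : ℕ,
    |A f j (c + (t:ℤ)) N - A f j c N| ≤ 2 * t := by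
  intro t
  induction t with
  | zero => simp
  | succ t ih =>
    have h1 : c + ((t:ℤ)+1) = (c + (t:ℤ)) + 1 := by ring
    have h2 := A_shift1 f j (c + (t:ℤ)) N
    have h3 := sv_nonneg (f (c + (t:ℤ) + (N:ℤ), j))
    have h4 := sv_le (f (c + (t:ℤ) + (N:ℤ), j))
    have h5 := sv_nonneg (f (c + (t:ℤ), j))
    have h6 := sv_le (f (c + (t:ℤ), j))
    rw [abs_le] at ih ⊢
    push_cast
    rw [h1, h2]
    constructor <;> [linarith [ih.1]; linarith [ih.2]]

omit hf in
lemma A_shift (j c d : ℤ) (N : ℕ) :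
    |A f j c N - A f j d N| ≤ 2 * ((c - d).natAbs : ℤ) := by
  rcases le_or_gt d c with h | h
  · have h1 := A_shift_nat f j d N (c - d).toNat
    rw [show d + ((c-d).toNat : ℤ) = c by omega] at h1
    exact le_trans h1 (by omega)
  · have h1 := A_shift_nat f j c N (d - c).toNat
    rw [show c + ((d-c).toNat : ℤ) = d by omega] at h1
    rw [abs_sub_comm]
    exact le_trans h1 (by omega)

lemma R2 (k : ℕ) (j c : ℤ) (N : ℕ) :
    |3^k * A f (j+(k:ℤ)) c N
      - (∏ t ∈ Finset.range k, mul (tg (f (c, j + (t:ℤ))))) * A f j c N| ≤ 5 * 7^k := by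
  induction k with
  | zero => simp
  | succ k ih =>
    have hr := R1 f hf (j+(k:ℤ)) c N
    set m := mul (tg (f (c, j+(k:ℤ)))) with hm
    set Pk := (∏ t ∈ Finset.range k, mul (tg (f (c, j + (t:ℤ))))) with hP
    have hprod : (∏ t ∈ Finset.range (k+1), mul (tg (f (c, j + (t:ℤ)))))
        = Pk * m := by rw [Finset.prod_range_succ]
    have hj : A f (j + ((k:ℤ)+1)) c N = A f ((j + (k:ℤ)) + 1) c N := by
      rw [show j + ((k:ℤ)+1) = (j + (k:ℤ)) + 1 by ring]
    have key : 3^(k+1) * A f (j+((k:ℕ)+1:ℤ)) c N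
          - (∏ t ∈ Finset.range (k+1), mul (tg (f (c, j + (t:ℤ))))) * A f j c N
        = m * (3^k * A f (j+(k:ℤ)) c N - Pk * A f j c N)
          + 3^k * (wv (f (c, j+(k:ℤ))) - wv (f (c+(N:ℤ), j+(k:ℤ)))) := by
      rw [hprod]
      push_cast
      rw [hj, pow_succ]
      linear_combination (3:ℤ)^k * hr
    have hd : |wv (f (c, j+(k:ℤ))) - wv (f (c+(N:ℤ), j+(k:ℤ)))| ≤ 5 := by
      have h1 := wv_ge (f (c, j+(k:ℤ))); have h2 := wv_le (f (c, j+(k:ℤ)))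
      have h3 := wv_ge (f (c+(N:ℤ), j+(k:ℤ))); have h4 := wv_le (f (c+(N:ℤ), j+(k:ℤ)))
      rw [abs_le]; omega
    have hm1 : (0:ℤ) ≤ m := (mul_pos _).le
    have hm2 : m ≤ 6 := mul_le _
    have h37 : (3:ℤ)^k ≤ 7^k := pow_le_pow_left₀ (by norm_num) (by norm_num) k
    have h30 : (0:ℤ) ≤ 3^k := by positivity
    calc |3^(k+1) * A f (j+((k:ℕ)+1:ℤ)) c N
          - (∏ t ∈ Finset.range (k+1), mul (tg (f (c, j + (t:ℤ))))) * A f j c N|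
        = |m * (3^k * A f (j+(k:ℤ)) c N - Pk * A f j c N)
            + 3^k * (wv (f (c, j+(k:ℤ))) - wv (f (c+(N:ℤ), j+(k:ℤ))))| := by rw [key]
      _ ≤ |m * (3^k * A f (j+(k:ℤ)) c N - Pk * A f j c N)|
            + |3^k * (wv (f (c, j+(k:ℤ))) - wv (f (c+(N:ℤ), j+(k:ℤ))))| := abs_add_le _ _
      _ = m * |3^k * A f (j+(k:ℤ)) c N - Pk * A f j c N|
            + 3^k * |wv (f (c, j+(k:ℤ))) - wv (f (c+(N:ℤ), j+(k:ℤ)))| := by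
            rw [abs_mul, abs_mul, abs_of_nonneg hm1, abs_of_nonneg h30]
      _ ≤ 6 * (5 * 7^k) + 7^k * 5 := by
            have := abs_nonneg (3^k * A f (j+(k:ℤ)) c N - Pk * A f j c N)
            have hpos5 : (0:ℤ) ≤ 5 := by norm_num
            nlinarith [abs_nonneg (wv (f (c, j+(k:ℤ))) - wv (f (c+(N:ℤ), j+(k:ℤ))))]
      _ = 5 * 7^(k+1) := by ring

lemma lower_bound (j : ℤ) (N : ℕ) : (N:ℤ) ≤ A f j 0 N + A f (j+1) 0 N := by
  have h : ∀ k ∈ Finset.range N,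
      (1:ℤ) ≤ sv (f ((0:ℤ) + (k:ℤ), j)) + sv (f ((0:ℤ) + (k:ℤ), j+1)) := by
    intro k _
    have h1 := tile_sum (f ((0:ℤ)+(k:ℤ), j))
    have h2 := north_south f hf ((0:ℤ)+(k:ℤ)) j
    omega
  calc (N:ℤ) = ∑ _k ∈ Finset.range N, (1:ℤ) := by simp
    _ ≤ ∑ k ∈ Finset.range N,
          (sv (f ((0:ℤ) + (k:ℤ), j)) + sv (f ((0:ℤ) + (k:ℤ), j+1))) :=
        Finset.sum_le_sum h
    _ = A f j 0 N + A f (j+1) 0 N := by rw [Finset.sum_add_distrib]; rfl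

lemma prod_ne_pow3 (j : ℤ) (k : ℕ) (hk : 0 < k) :
    (∏ t ∈ Finset.range k, mul (tg (f (0, j + (t:ℤ))))) ≠ 3^k := by
  intro h
  have heven : (2:ℤ) ∣ (∏ t ∈ Finset.range k, mul (tg (f (0, j + (t:ℤ))))) :=
    dvd_trans (mul_even _) (Finset.dvd_prod_of_mem _ (Finset.mem_range.2 hk))
  rw [h] at heven
  have hodd : Odd ((3:ℤ)^k) := Odd.pow (by exact ⟨1, by norm_num⟩)
  rcases heven with ⟨c, hc⟩
  rcases hodd with ⟨d, hd⟩
  omega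

lemma no_vert (a : ℤ) (b : ℕ) (hb : 0 < b)
    (hp : ∀ i j : ℤ, f (i + a, j + (b:ℤ)) = f (i,j)) : False := by
  have hAB : ∀ j (N : ℕ), A f (j + (b:ℤ)) 0 N = A f j (0 - a) N := by
    intro j N
    unfold A
    apply Finset.sum_congr rfl
    intro k _
    rw [show (0:ℤ) + (k:ℤ) = (0 - a + (k:ℤ)) + a by ring, hp (0 - a + (k:ℤ)) j]
  set C : ℤ := 5*7^b + 3^b * (2*(a.natAbs:ℤ)) with hC
  have hbound : ∀ j : ℤ, ∀ N : ℕ, A f j 0 N ≤ C := by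
    intro j N
    have h2 := R2 f hf b j 0 N
    have h3 := hAB j N
    have h4 := A_shift f j (0-a) 0 N
    rw [show (0 - a - 0 : ℤ) = -a by ring, Int.natAbs_neg] at h4
    set P := (∏ t ∈ Finset.range b, mul (tg (f (0, j + (t:ℤ))))) with hP
    have hne : P ≠ 3^b := prod_ne_pow3 f hf j b hb
    have hAnn := A_nonneg f j 0 N
    -- |(3^b - P) * A| ≤ 5*7^b + 3^b * 2|a|
    have key : |(3^b - P) * A f j 0 N| ≤ C := by
      have e1 : (3^b - P) * A f j 0 N
          = (3^b * A f (j+(b:ℤ)) 0 N - P * A f j 0 N)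
            - 3^b * (A f j (0-a) N - A f j 0 N) := by
        rw [h3]; ring
      rw [e1]
      have habs2 : |(3:ℤ)^b * (A f j (0-a) N - A f j 0 N)| ≤ 3^b * (2*(a.natAbs:ℤ)) := by
        rw [abs_mul, abs_of_nonneg (by positivity : (0:ℤ) ≤ 3^b)]
        have h30 : (0:ℤ) ≤ 3^b := by positivity
        exact mul_le_mul_of_nonneg_left h4 h30
      calc |(3^b * A f (j+(b:ℤ)) 0 N - P * A f j 0 N)
            - 3^b * (A f j (0-a) N - A f j 0 N)|
          ≤ |3^b * A f (j+(b:ℤ)) 0 N - P * A f j 0 N|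
            + |3^b * (A f j (0-a) N - A f j 0 N)| := abs_sub _ _
        _ ≤ C := by rw [hC]; linarith
    have hge1 : 1 ≤ |3^b - P| :=
      Int.one_le_abs (fun h => hne (by linarith [sub_eq_zero.1 h]))
    have : A f j 0 N ≤ |(3^b - P) * A f j 0 N| := by
      rw [abs_mul, abs_of_nonneg hAnn]
      nlinarith
    linarith
  have hCpos : 0 ≤ C := by positivity
  have hlow := lower_bound f hf 0 ((2*C).toNat + 1)
  have hb0 := hbound 0 ((2*C).toNat + 1)
  have hb1 := hbound (0+1) ((2*C).toNat + 1)
  have hcast : (((2*C).toNat + 1 : ℕ) : ℤ) = 2*C + 1 := by omega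
  linarith

lemma no_horiz (a : ℕ) (ha : 0 < a) (hp : ∀ i j : ℤ, f (i + (a:ℤ), j) = f (i,j)) :
    False := by
  have hkey : ∀ j : ℤ, 3 * A f (j+1) 0 a = mul (tg (f (0,j))) * A f j 0 a := by
    intro j
    have h := R1 f hf j 0 a
    rw [hp 0 j] at h
    linarith
  have hlow : ∀ j : ℤ, (a:ℤ) ≤ A f j 0 a + A f (j+1) 0 a := fun j => lower_bound f hf j a
  have hpos : ∀ j : ℤ, 1 ≤ A f j 0 a := by
    intro j
    rcases lt_or_ge 0 (A f j 0 a) with h | h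
    · exact h
    · have h0 : A f j 0 a = 0 := le_antisymm h (A_nonneg f j 0 a)
      have h1 := hkey j
      rw [h0, mul_zero] at h1
      have := hlow j
      omega
  have hiter : ∀ (j : ℤ) (k : ℕ), 3^k * A f (j + (k:ℤ)) 0 a
      = (∏ t ∈ Finset.range k, mul (tg (f (0, j + (t:ℤ))))) * A f j 0 a := by
    intro j k
    induction k with
    | zero => simp
    | succ k ih =>
      have hk := hkey (j + (k:ℤ))
      rw [Finset.prod_range_succ]
      push_cast
      rw [show j + ((k:ℤ)+1) = (j+(k:ℤ))+1 by ring, pow_succ]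
      linear_combination (3:ℤ)^k * hk + mul (tg (f (0, j + (k:ℤ)))) * ih
  have main : ∀ m1 m2 : ℕ, m1 < m2 → A f (m1:ℤ) 0 a = A f (m2:ℤ) 0 a → False := by
    intro m1 m2 hlt he
    have hk := hiter (m1:ℤ) (m2 - m1)
    rw [show ((m1:ℕ):ℤ) + ((m2-m1:ℕ):ℤ) = ((m2:ℕ):ℤ) by omega] at hk
    rw [← he] at hk
    have hpos1 := hpos (m1:ℤ)
    have hA : A f ((m1:ℕ):ℤ) 0 a ≠ 0 := by omega
    exact prod_ne_pow3 f hf ((m1:ℕ):ℤ) (m2-m1) (by omega)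
      (mul_right_cancel₀ hA hk).symm
  have hmap : ∀ m ∈ Finset.range (2*a+2), A f (m:ℤ) 0 a ∈ Finset.Icc (1:ℤ) (2*(a:ℤ)) :=
    fun m _ => Finset.mem_Icc.2 ⟨hpos _, A_le f _ 0 a⟩
  have hcard : (Finset.Icc (1:ℤ) (2*(a:ℤ))).card < (Finset.range (2*a+2)).card := by
    rw [Finset.card_range, Int.card_Icc]
    omega
  obtain ⟨m1, _, m2, _, hne, heq⟩ :=
    Finset.exists_ne_map_eq_of_card_lt_of_maps_to hcard hmap
  rcases hne.lt_or_gt with hlt | hlt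
  · exact main m1 m2 hlt heq
  · exact main m2 m1 hlt heq.symm

end Tiling

end Aper

/-- There is an aperiodic Wang tile set: it admits tilings of the plane, but no tiling is
invariant under a nonzero translation. -/
theorem exists_aperiodic_palette :
    ∃ W : WangTileSet,
      (∃ f : ℤ × ℤ → W.Tile, W.IsTiling f) ∧
      ∀ f : ℤ × ℤ → W.Tile, W.IsTiling f →
        ∀ v : ℤ × ℤ, v ≠ 0 → ∃ x : ℤ × ℤ, f (x + v) ≠ f x := by
  refine ⟨Aper.W, ⟨Aper.f0, Aper.f0_tiling⟩, ?_⟩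
  intro f hf v hv
  by_contra hcon
  push_neg at hcon
  obtain ⟨a, b⟩ := v
  have hinv : ∀ i j : ℤ, f (i + a, j + b) = f (i, j) := fun i j => hcon (i, j)
  have hinvneg : ∀ i j : ℤ, f (i + -a, j + -b) = f (i, j) := by
    intro i j
    have h := hinv (i + -a) (j + -b)
    rw [show i + -a + a = i by ring, show j + -b + b = j by ring] at h
    exact h.symm
  rcases lt_trichotomy b 0 with hb | hb | hb
  · exact Aper.no_vert f hf (-a) (-b).toNat (by omega)
      (by intro i j
          rw [show (((-b).toNat : ℕ) : ℤ) = -b by omega]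
          exact hinvneg i j)
  · subst hb
    rcases lt_trichotomy a 0 with hA | hA | hA
    · refine Aper.no_horiz f hf (-a).toNat (by omega) ?_
      intro i j
      rw [show (((-a).toNat : ℕ) : ℤ) = -a by omega]
      have h := hinvneg i j
      rw [show j + -(0:ℤ) = j by ring] at h
      exact h
    · exact hv (by rw [hA]; rfl)
    · refine Aper.no_horiz f hf a.toNat (by omega) ?_
      intro i j
      rw [show ((a.toNat : ℕ) : ℤ) = a by omega]
      have h := hinv i j
      rw [show j + (0:ℤ) = j by ring] at h
      exact h
  · exact Aper.no_vert f hf a b.toNat (by omega)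
      (by intro i j
          rw [show ((b.toNat : ℕ) : ℤ) = b by omega]
          exact hinv i j)
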